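/- arXiv:2404.17220 — 6 statements merged into one kernel-verified Lean document; each statement's English description precedes it below -/
import Mathlib

section
/- Let ε > 0 be such that (δ − ν − ε⁻¹α + μ)² + 4 ε⁻¹ β γ > 0, set d := ε⁻¹α − μ − δ + ν, Ω := Ω^ε, and for k ∈ ℝⁿ set λ^± := ½(ε⁻¹α − μ + δ − ν − 8π²‖k‖² ± Ω). Then for every t ∈ ℝ the matrix exponential of t·M_k^ε is given entrywise by: exp(t M_k^ε) = (1/(2Ω)) · !![(Ω + d)·e^{λ⁺t} + (Ω − d)·e^{λ⁻t}, 2ε⁻¹β·(e^{λ⁺t} − e^{λ⁻t}); 2γ·(e^{λ⁺t} − e^{λ⁻t}), (Ω − d)·e^{λ⁺t} + (Ω + d)·e^{λ⁻t}]. In particular, the unique solution of the linear ODE w′(t) = M_k^ε w(t), w(0) = w₀ ∈ ℝ², is w(t) = exp(t M_k^ε) w₀ with these entries. -/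
open Real

/-- `mulVec` as a linear map from matrices to continuous linear maps. -/
noncomputable def mulVecCLM : Matrix (Fin 2) (Fin 2) ℝ →ₗ[ℝ] ((Fin 2 → ℝ) →L[ℝ] (Fin 2 → ℝ)) where
  toFun A := LinearMap.toContinuousLinearMap A.mulVecLin
  map_add' A B := by
    ext v i
    simp [Matrix.add_mulVec]
  map_smul' c A := by
    ext v i
    simp [Matrix.smul_mulVec]

@[simp] lemma mulVecCLM_apply (A : Matrix (Fin 2) (Fin 2) ℝ) (v : Fin 2 → ℝ) :
    mulVecCLM A v = A.mulVec v := rfl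

lemma ode_unique (M : Matrix (Fin 2) (Fin 2) ℝ) (w₀ : Fin 2 → ℝ) (w : ℝ → Fin 2 → ℝ)
    (hw : ∀ s, HasDerivAt w (M.mulVec (w s)) s) (h0 : w 0 = w₀) (t : ℝ) :
    w t = (NormedSpace.exp (t • M)).mulVec w₀ := by
  letI : SeminormedRing (Matrix (Fin 2) (Fin 2) ℝ) := Matrix.linftyOpSemiNormedRing
  letI : NormedRing (Matrix (Fin 2) (Fin 2) ℝ) := Matrix.linftyOpNormedRing
  letI : NormedAlgebra ℝ (Matrix (Fin 2) (Fin 2) ℝ) := Matrix.linftyOpNormedAlgebra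
  set A : ℝ → Matrix (Fin 2) (Fin 2) ℝ := fun s => NormedSpace.exp (s • (-M)) with hA
  set L : Matrix (Fin 2) (Fin 2) ℝ →L[ℝ] ((Fin 2 → ℝ) →L[ℝ] (Fin 2 → ℝ)) :=
    LinearMap.toContinuousLinearMap mulVecCLM with hL
  have hAd : ∀ s : ℝ, HasDerivAt A (A s * (-M)) s := fun s =>
    hasDerivAt_exp_smul_const (𝕂 := ℝ) (-M) s
  have hg : ∀ s : ℝ, HasDerivAt (fun s => (A s).mulVec (w s)) 0 s := by
    intro s
    have hc : HasDerivAt (fun s => L (A s)) (L (A s * (-M))) s :=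
      L.hasFDerivAt.comp_hasDerivAt s (hAd s)
    have := hc.clm_apply (hw s)
    have h2 : L (A s * -M) (w s) + L (A s) (M.mulVec (w s)) = 0 := by
      have : L (A s * -M) (w s) = (A s * -M).mulVec (w s) := rfl
      have : L (A s) (M.mulVec (w s)) = (A s).mulVec (M.mulVec (w s)) := rfl
      show (A s * -M).mulVec (w s) + (A s).mulVec (M.mulVec (w s)) = 0
      rw [Matrix.mulVec_mulVec, Matrix.mul_neg, Matrix.neg_mulVec]
      exact neg_add_cancel _
    rw [h2] at this
    exact this.congr_deriv rfl
  have hconst : (A t).mulVec (w t) = (A 0).mulVec (w 0) :=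
    is_const_of_fderiv_eq_zero (𝕜 := ℝ) (fun s => (hg s).differentiableAt)
      (fun s => by
        rw [(hg s).hasFDerivAt.fderiv]
        ext x
        simp) t 0
  have hA0 : A 0 = 1 := by simp [hA, NormedSpace.exp_zero]
  have hinv : NormedSpace.exp (t • M) * A t = 1 := by
    rw [hA]
    beta_reduce
    erw [← NormedSpace.exp_add_of_commute_of_mem_ball (𝕂 := ℝ) (x := t • M) (y := t • -M) _
      (by simp [NormedSpace.expSeries_radius_eq_top]) (by simp [NormedSpace.expSeries_radius_eq_top])]
    · simp
    · simp only [smul_neg]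
      exact (Commute.refl (t • M)).neg_right
  have : (NormedSpace.exp (t • M)).mulVec ((A t).mulVec (w t)) = w t := by
    rw [Matrix.mulVec_mulVec, hinv, Matrix.one_mulVec]
  rw [← this, hconst, hA0, Matrix.one_mulVec, h0]

lemma hasDerivAt_col (a b c e lP lM p q r u : ℝ)
    (h1 : p * lP = a * p + b * r) (h2 : q * lM = a * q + b * u)
    (h3 : r * lP = c * p + e * r) (h4 : u * lM = c * q + e * u) (s : ℝ) :
    HasDerivAt (fun y : ℝ => ![p * Real.exp (lP * y) + q * Real.exp (lM * y),
                          r * Real.exp (lP * y) + u * Real.exp (lM * y)])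
      ((!![a, b; c, e]).mulVec
        ![p * Real.exp (lP * s) + q * Real.exp (lM * s),
          r * Real.exp (lP * s) + u * Real.exp (lM * s)]) s := by
  have hP : HasDerivAt (fun y : ℝ => Real.exp (lP * y)) (lP * Real.exp (lP * s)) s := by
    simpa [mul_comm] using ((hasDerivAt_id s).const_mul lP).exp
  have hM : HasDerivAt (fun y : ℝ => Real.exp (lM * y)) (lM * Real.exp (lM * s)) s := by
    simpa [mul_comm] using ((hasDerivAt_id s).const_mul lM).exp
  apply hasDerivAt_pi.2
  intro i
  fin_cases i
  · simp only [Matrix.cons_val_zero]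
    convert ((hP.const_mul p).add (hM.const_mul q)) using 1
    · rfl
    simp only [Matrix.mulVec, dotProduct, Fin.sum_univ_two, Fin.mk_zero, Fin.mk_one, Matrix.of_apply,
      Matrix.cons_val', Matrix.cons_val_zero, Matrix.cons_val_one, Matrix.head_cons,
      Matrix.empty_val', Matrix.cons_val_fin_one, Matrix.head_fin_const]
    linear_combination (-Real.exp (lP * s)) * h1 + (-Real.exp (lM * s)) * h2
  · simp only [Matrix.cons_val_one, Matrix.head_cons]
    convert ((hP.const_mul r).add (hM.const_mul u)) using 1
    · rfl
    simp only [Matrix.mulVec, dotProduct, Fin.sum_univ_two, Fin.mk_zero, Fin.mk_one, Matrix.of_apply,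
      Matrix.cons_val', Matrix.cons_val_zero, Matrix.cons_val_one, Matrix.head_cons,
      Matrix.empty_val', Matrix.cons_val_fin_one, Matrix.head_fin_const]
    linear_combination (-Real.exp (lP * s)) * h3 + (-Real.exp (lM * s)) * h4


/-- Explicit entrywise formula for the matrix exponential `exp(t M_k^ε)`,
and the fact that `t ↦ exp(t M_k^ε) w₀` is the unique solution of `w′ = M_k^ε w`, `w(0) = w₀`. -/
theorem stmt_4 (n : ℕ) (hn : 1 ≤ n) (α β γ δ μ ν ε : ℝ) (hε : 0 < ε)
    (hrad : 0 < (δ - ν - ε⁻¹ * α + μ) ^ 2 + 4 * ε⁻¹ * β * γ)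
    (k : EuclideanSpace ℝ (Fin n)) (t : ℝ) :
    let Ω : ℝ := Real.sqrt ((δ - ν - ε⁻¹ * α + μ) ^ 2 + 4 * ε⁻¹ * β * γ)
    let d : ℝ := ε⁻¹ * α - μ - δ + ν
    let M : Matrix (Fin 2) (Fin 2) ℝ :=
      !![ε⁻¹ * α - μ - 4 * π ^ 2 * ‖k‖ ^ 2, ε⁻¹ * β;
         γ, δ - ν - 4 * π ^ 2 * ‖k‖ ^ 2]
    let lamP : ℝ := (1 / 2) * (ε⁻¹ * α - μ + δ - ν - 8 * π ^ 2 * ‖k‖ ^ 2 + Ω)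
    let lamM : ℝ := (1 / 2) * (ε⁻¹ * α - μ + δ - ν - 8 * π ^ 2 * ‖k‖ ^ 2 - Ω)
    NormedSpace.exp (t • M) =
        (1 / (2 * Ω)) •
          !![(Ω + d) * Real.exp (lamP * t) + (Ω - d) * Real.exp (lamM * t),
             2 * ε⁻¹ * β * (Real.exp (lamP * t) - Real.exp (lamM * t));
             2 * γ * (Real.exp (lamP * t) - Real.exp (lamM * t)),
             (Ω - d) * Real.exp (lamP * t) + (Ω + d) * Real.exp (lamM * t)] ∧
      ∀ (w₀ : Fin 2 → ℝ) (w : ℝ → Fin 2 → ℝ),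
        (∀ s : ℝ, HasDerivAt w (M.mulVec (w s)) s) → w 0 = w₀ →
          w t = (NormedSpace.exp (t • M)).mulVec w₀ := by
  intro Ω d M lamP lamM
  have hΩdef : Ω = Real.sqrt ((δ - ν - ε⁻¹ * α + μ) ^ 2 + 4 * ε⁻¹ * β * γ) := rfl
  have hd : d = ε⁻¹ * α - μ - δ + ν := rfl
  have hM : M = !![ε⁻¹ * α - μ - 4 * π ^ 2 * ‖k‖ ^ 2, ε⁻¹ * β;
      γ, δ - ν - 4 * π ^ 2 * ‖k‖ ^ 2] := rfl
  have hlp : lamP = (1 / 2) * (ε⁻¹ * α - μ + δ - ν - 8 * π ^ 2 * ‖k‖ ^ 2 + Ω) := rfl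
  have hlm : lamM = (1 / 2) * (ε⁻¹ * α - μ + δ - ν - 8 * π ^ 2 * ‖k‖ ^ 2 - Ω) := rfl
  clear_value Ω d M lamP lamM
  have hΩpos : 0 < Ω := hΩdef ▸ Real.sqrt_pos.2 hrad
  have hΩne : Ω ≠ 0 := ne_of_gt hΩpos
  have hΩ2 : Ω ^ 2 = (δ - ν - ε⁻¹ * α + μ) ^ 2 + 4 * ε⁻¹ * β * γ := by
    rw [hΩdef]; exact Real.sq_sqrt hrad.le
  -- column 0
  set W0 : ℝ → Fin 2 → ℝ := fun y =>
    ![(Ω + d) / (2 * Ω) * Real.exp (lamP * y) + (Ω - d) / (2 * Ω) * Real.exp (lamM * y),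
      2 * γ / (2 * Ω) * Real.exp (lamP * y) + (-(2 * γ)) / (2 * Ω) * Real.exp (lamM * y)]
    with hW0
  have hW0d : ∀ s : ℝ, HasDerivAt W0 (M.mulVec (W0 s)) s := by
    intro s
    rw [hW0, hM]
    refine hasDerivAt_col _ _ _ _ _ _ _ _ _ _ ?_ ?_ ?_ ?_ s
    · rw [hlp, hd]; linear_combination hΩ2 / (4 * Ω)
    · rw [hlm, hd]; linear_combination (-(1 : ℝ) / (4 * Ω)) * hΩ2
    · rw [hlp, hd]; ring
    · rw [hlm, hd]; ring
  have hW00 : W0 0 = ![1, 0] := by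
    funext i
    fin_cases i <;>
      simp only [hW0, Matrix.cons_val_zero, Matrix.cons_val_one, Matrix.head_cons, mul_zero,
        Real.exp_zero, mul_one, Fin.mk_zero, Fin.mk_one] <;>
      field_simp <;> ring
  have H0 : W0 t = (NormedSpace.exp (t • M)).mulVec ![1, 0] :=
    ode_unique M ![1, 0] W0 hW0d hW00 t
  -- column 1
  set W1 : ℝ → Fin 2 → ℝ := fun y =>
    ![2 * (ε⁻¹ * β) / (2 * Ω) * Real.exp (lamP * y) + (-(2 * (ε⁻¹ * β))) / (2 * Ω) * Real.exp (lamM * y),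
      (Ω - d) / (2 * Ω) * Real.exp (lamP * y) + (Ω + d) / (2 * Ω) * Real.exp (lamM * y)]
    with hW1
  have hW1d : ∀ s : ℝ, HasDerivAt W1 (M.mulVec (W1 s)) s := by
    intro s
    rw [hW1, hM]
    refine hasDerivAt_col _ _ _ _ _ _ _ _ _ _ ?_ ?_ ?_ ?_ s
    · rw [hlp, hd]; ring
    · rw [hlm, hd]; ring
    · rw [hlp, hd]; linear_combination hΩ2 / (4 * Ω)
    · rw [hlm, hd]; linear_combination (-(1 : ℝ) / (4 * Ω)) * hΩ2
  have hW10 : W1 0 = ![0, 1] := by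
    funext i
    fin_cases i <;>
      simp only [hW1, Matrix.cons_val_zero, Matrix.cons_val_one, Matrix.head_cons, mul_zero,
        Real.exp_zero, mul_one, Fin.mk_zero, Fin.mk_one] <;>
      field_simp <;> ring
  have H1 : W1 t = (NormedSpace.exp (t • M)).mulVec ![0, 1] :=
    ode_unique M ![0, 1] W1 hW1d hW10 t
  have hmv0 : ∀ i, (NormedSpace.exp (t • M)).mulVec ![1, 0] i
      = (NormedSpace.exp (t • M)) i 0 := by
    intro i
    simp [Matrix.mulVec, dotProduct, Fin.sum_univ_two]
  have hmv1 : ∀ i, (NormedSpace.exp (t • M)).mulVec ![0, 1] i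
      = (NormedSpace.exp (t • M)) i 1 := by
    intro i
    simp [Matrix.mulVec, dotProduct, Fin.sum_univ_two]
  constructor
  · ext i j
    fin_cases j
    · have : (NormedSpace.exp (t • M)) i 0 = W0 t i := by rw [← hmv0 i, ← H0]
      rw [Fin.mk_zero, this, hW0]
      fin_cases i <;>
        simp only [Matrix.smul_apply, Matrix.cons_val_zero, Matrix.cons_val_one,
          Matrix.head_cons, Fin.mk_zero, Fin.mk_one, Matrix.of_apply, Matrix.cons_val',
          Matrix.empty_val', Matrix.cons_val_fin_one, smul_eq_mul, Matrix.vecHead,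
          Matrix.vecTail] <;>
        ring_nf
    · have : (NormedSpace.exp (t • M)) i 1 = W1 t i := by rw [← hmv1 i, ← H1]
      rw [Fin.mk_one, this, hW1]
      fin_cases i <;>
        simp only [Matrix.smul_apply, Matrix.cons_val_zero, Matrix.cons_val_one,
          Matrix.head_cons, Fin.mk_zero, Fin.mk_one, Matrix.of_apply, Matrix.cons_val',
          Matrix.empty_val', Matrix.cons_val_fin_one, smul_eq_mul, Matrix.vecHead,
          Matrix.vecTail] <;>
        ring_nf
  · intro w₀ w hw h0
    exact ode_unique M w₀ w hw h0 t
end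

section
/- Let β ≠ 0 and let ε > 0 be such that (δ − ν − ε⁻¹α + μ)² + 4 ε⁻¹ β γ > 0, and fix σ ∈ {1, −1}. Then for every k ∈ ℝⁿ the line L_σ^ε := {(x, y) ∈ ℝ² : (ε(δ − ν + μ) − α + σ·ε·Ω^ε)·x − 2β·y = 0} is invariant under the flow of the linear ODE w′ = M_k^ε w; that is, for every w₀ ∈ L_σ^ε and every t ∈ ℝ one has exp(t M_k^ε)·w₀ ∈ L_σ^ε. -/
open Real

open scoped Matrix

attribute [local instance] Matrix.linftyOpNormedRing Matrix.linftyOpNormedAlgebra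

lemma vecMul_pow_of_left_eig (A : Matrix (Fin 2) (Fin 2) ℝ) (r : Fin 2 → ℝ) (l : ℝ)
    (h : r ᵥ* A = l • r) : ∀ m : ℕ, r ᵥ* (A ^ m) = l ^ m • r := by
  intro m
  induction m with
  | zero => simp
  | succ m ih =>
    rw [pow_succ, ← Matrix.vecMul_vecMul, ih, Matrix.smul_vecMul, h, smul_smul, ← pow_succ]

lemma vecMul_exp_of_left_eig (A : Matrix (Fin 2) (Fin 2) ℝ) (r : Fin 2 → ℝ) (l : ℝ)
    (h : r ᵥ* A = l • r) :
    r ᵥ* (NormedSpace.exp A) = Real.exp l • r := by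
  have hL : ∃ L : Matrix (Fin 2) (Fin 2) ℝ →L[ℝ] (Fin 2 → ℝ),
      ∀ B, L B = r ᵥ* B := by
    refine ⟨LinearMap.toContinuousLinearMap
      { toFun := fun B => r ᵥ* B
        map_add' := fun B C => Matrix.vecMul_add B C r
        map_smul' := fun a B => ?_ }, fun B => rfl⟩
    simp only [RingHom.id_apply]
    rw [← Matrix.mulVec_transpose, ← Matrix.mulVec_transpose, Matrix.transpose_smul,
      Matrix.smul_mulVec]
  obtain ⟨L, hLdef⟩ := hL
  have hsum : Summable fun m : ℕ => ((Nat.factorial m : ℝ))⁻¹ • A ^ m :=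
    NormedSpace.expSeries_summable' (𝕂 := ℝ) A
  calc r ᵥ* (NormedSpace.exp A) = L (∑' m : ℕ, ((Nat.factorial m : ℝ))⁻¹ • A ^ m) := by
        rw [hLdef, NormedSpace.exp_eq_tsum ℝ]
    _ = ∑' m : ℕ, L (((Nat.factorial m : ℝ))⁻¹ • A ^ m) := (L.map_tsum hsum)
    _ = ∑' m : ℕ, (((Nat.factorial m : ℝ))⁻¹ * l ^ m) • r := by
        refine tsum_congr fun m => ?_
        rw [map_smul, hLdef, vecMul_pow_of_left_eig A r l h m, smul_smul]
    _ = (∑' m : ℕ, ((Nat.factorial m : ℝ))⁻¹ * l ^ m) • r := by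
        refine Summable.tsum_smul_const ?_ r
        simpa [smul_eq_mul] using NormedSpace.expSeries_summable' (𝕂 := ℝ) l
    _ = Real.exp l • r := by
        congr 1
        rw [Real.exp_eq_exp_ℝ, NormedSpace.exp_eq_tsum ℝ]
        simp [smul_eq_mul]

/-- For `β ≠ 0` and each sign `σ ∈ {1, −1}`, the line
`L_σ^ε = {(x,y) : (ε(δ − ν + μ) − α + σ·ε·Ω^ε)x − 2βy = 0}` is invariant under the flow
`exp(t M_k^ε)` of the Fourier-transformed linear fast-reaction system, for every `k ∈ ℝⁿ`. -/
theorem stmt_8 (n : ℕ) (hn : 1 ≤ n) (α β γ δ μ ν ε : ℝ) (hβ : β ≠ 0) (hε : 0 < ε)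
    (hrad : 0 < (δ - ν - ε⁻¹ * α + μ) ^ 2 + 4 * ε⁻¹ * β * γ)
    (σ : ℝ) (hσ : σ = 1 ∨ σ = -1) (k : EuclideanSpace ℝ (Fin n)) :
    let c : ℝ := ε * (δ - ν + μ) - α
      + σ * (ε * Real.sqrt ((δ - ν - ε⁻¹ * α + μ) ^ 2 + 4 * ε⁻¹ * β * γ))
    let M : Matrix (Fin 2) (Fin 2) ℝ :=
      !![ε⁻¹ * α - μ - 4 * π ^ 2 * ‖k‖ ^ 2, ε⁻¹ * β;
         γ, δ - ν - 4 * π ^ 2 * ‖k‖ ^ 2]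
    ∀ w₀ : Fin 2 → ℝ, c * w₀ 0 - 2 * β * w₀ 1 = 0 →
      ∀ t : ℝ,
        c * ((NormedSpace.exp (t • M)).mulVec w₀) 0
          - 2 * β * ((NormedSpace.exp (t • M)).mulVec w₀) 1 = 0 := by
  intro c M w₀ hw t
  have hε' : ε ≠ 0 := hε.ne'
  set Ω : ℝ := Real.sqrt ((δ - ν - ε⁻¹ * α + μ) ^ 2 + 4 * ε⁻¹ * β * γ) with hΩdef
  have hΩ2 : Ω ^ 2 = (δ - ν - ε⁻¹ * α + μ) ^ 2 + 4 * ε⁻¹ * β * γ :=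
    Real.sq_sqrt hrad.le
  have hS : ε ^ 2 * Ω ^ 2 = (ε * (δ - ν + μ) - α) ^ 2 + 4 * ε * β * γ := by
    rw [hΩ2]; field_simp; ring
  have hσ2 : σ ^ 2 = 1 := by rcases hσ with h | h <;> simp [h]
  have hinv : ε * ε⁻¹ = 1 := mul_inv_cancel₀ hε'
  have hc : c = ε * (δ - ν + μ) - α + σ * (ε * Ω) := rfl
  set K : ℝ := 4 * π ^ 2 * ‖k‖ ^ 2 with hK
  set r : Fin 2 → ℝ := ![c, -(2 * β)] with hr
  set l : ℝ := δ - ν - K - c * ε⁻¹ / 2 with hl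
  have heig : r ᵥ* M = l • r := by
    funext j
    fin_cases j <;>
      simp [hr, Matrix.vecMul, dotProduct, Fin.sum_univ_two, M]
    · rw [hl, hc]
      linear_combination (ε⁻¹ / 2) * hS + (ε⁻¹ * ε ^ 2 * Ω ^ 2 / 2) * hσ2
        + ((ε * (δ - ν + μ) - α + σ * (ε * Ω)) * (δ - ν + μ) + 2 * β * γ) * hinv
    · rw [hl]; field_simp; ring
  have heig' : r ᵥ* (t • M) = (t * l) • r := by
    rw [← Matrix.mulVec_transpose, Matrix.transpose_smul, Matrix.smul_mulVec,
      Matrix.mulVec_transpose, heig, smul_smul]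
  have key : r ⬝ᵥ ((NormedSpace.exp (t • M)).mulVec w₀) = 0 := by
    rw [Matrix.dotProduct_mulVec, vecMul_exp_of_left_eig _ _ _ heig',
      smul_dotProduct]
    have : r ⬝ᵥ w₀ = 0 := by
      simp [hr, dotProduct, Fin.sum_univ_two]
      linarith [hw]
    rw [this, smul_zero]
  simp only [hr, dotProduct, Fin.sum_univ_two, Matrix.cons_val_zero,
    Matrix.cons_val_one, Matrix.head_cons] at key
  linarith [key]
end

section
/- Let α, β, γ, δ, μ, ν be real numbers with α < 0 and β ≠ 0, and let M > 0. For ε > 0 set c_ε := ε(δ − ν + μ) − α + √((ε(δ − ν + μ) − α)² + 4 ε β γ), and define the truncated slow and critical manifolds L_ε := {p ∈ ℝ² : c_ε·p₁ − 2β·p₂ = 0} ∩ closedBall(0, M) and L₀ := {p ∈ ℝ² : α·p₁ + β·p₂ = 0} ∩ closedBall(0, M). Then there exist constants C > 0 and ε₀ > 0 such that for all ε ∈ (0, ε₀] the Hausdorff distance satisfies d_H(L_ε, L₀) ≤ C·ε. -/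
open Real Metric

/-- Projection trick: given a point `q₀` on a line through the origin, we can find a point
on the line inside the ball of radius `M` at distance at most `2 * dist p q₀` from `p`,
provided `p` itself lies in the ball. -/
lemma line_proj_aux (a b M : ℝ) (hM : 0 < M) (p q₀ : ℝ × ℝ)
    (hq : a * q₀.1 + b * q₀.2 = 0) (hp : dist p 0 ≤ M) :
    ∃ q : ℝ × ℝ, a * q.1 + b * q.2 = 0 ∧ dist q 0 ≤ M ∧ dist p q ≤ 2 * dist p q₀ := by
  by_cases h : dist q₀ 0 ≤ M
  · exact ⟨q₀, hq, h, by nlinarith [dist_nonneg (x := p) (y := q₀)]⟩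
  · push_neg at h
    have hq0 : ‖q₀‖ = dist q₀ 0 := (dist_zero_right q₀).symm
    have hn : 0 < ‖q₀‖ := by rw [hq0]; linarith
    set t := M / ‖q₀‖ with ht
    have ht0 : 0 < t := div_pos hM hn
    have ht1 : t ≤ 1 := by
      rw [ht, div_le_one hn, hq0]; linarith
    refine ⟨t • q₀, ?_, ?_, ?_⟩
    · have h1 : (t • q₀).1 = t * q₀.1 := rfl
      have h2 : (t • q₀).2 = t * q₀.2 := rfl
      rw [h1, h2]; linear_combination t * hq
    · rw [dist_zero_right, norm_smul, Real.norm_eq_abs, abs_of_pos ht0, ht,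
        div_mul_cancel₀ _ (ne_of_gt hn)]
    · have hd1 : dist p (t • q₀) ≤ dist p q₀ + dist q₀ (t • q₀) := dist_triangle _ _ _
      have hd2 : dist q₀ (t • q₀) = (1 - t) * ‖q₀‖ := by
        rw [dist_eq_norm]
        have : q₀ - t • q₀ = (1 - t) • q₀ := by
          rw [sub_smul, one_smul]
        rw [this, norm_smul, Real.norm_eq_abs, abs_of_nonneg (by linarith)]
      have hd3 : (1 - t) * ‖q₀‖ = ‖q₀‖ - M := by
        rw [ht, sub_mul, one_mul, div_mul_cancel₀ _ (ne_of_gt hn)]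
      have hd4 : ‖q₀‖ - M ≤ dist p q₀ := by
        have h5 : ‖q₀‖ - ‖p‖ ≤ ‖q₀ - p‖ := norm_sub_norm_le q₀ p
        have h6 : ‖q₀ - p‖ = dist p q₀ := by rw [← dist_eq_norm, dist_comm]
        have h7 : ‖p‖ ≤ M := by rw [← dist_zero_right]; exact hp
        linarith
      linarith
set_option maxHeartbeats 1000000 in
/-- On bounded sets, the attracting slow manifold
`{p : c_ε p₁ − 2β p₂ = 0}` is `O(ε)`-close in Hausdorff distance to the critical manifold
`{p : α p₁ + β p₂ = 0}`. -/
theorem stmt_10 (α β γ δ μ ν : ℝ) (hα : α < 0) (hβ : β ≠ 0) (M : ℝ) (hM : 0 < M) :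
    ∃ C > (0 : ℝ), ∃ ε₀ > (0 : ℝ), ∀ ε ∈ Set.Ioc (0 : ℝ) ε₀,
      Metric.hausdorffDist
        ({p : ℝ × ℝ |
            (ε * (δ - ν + μ) - α
              + Real.sqrt ((ε * (δ - ν + μ) - α) ^ 2 + 4 * ε * β * γ)) * p.1
              - 2 * β * p.2 = 0}
          ∩ Metric.closedBall (0 : ℝ × ℝ) M)
        ({p : ℝ × ℝ | α * p.1 + β * p.2 = 0} ∩ Metric.closedBall (0 : ℝ × ℝ) M)
        ≤ C * ε := by
  have hαpos : 0 < -α := by linarith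
  have hβpos : 0 < |β| := abs_pos.mpr hβ
  set s := δ - ν + μ with hs
  clear_value s
  set K : ℝ := 2 * |s| + 8 * |β * γ| / (-α) + 1 with hK
  clear_value K
  have hKpos : 0 < K := by
    have t1 : 0 ≤ 8 * |β * γ| / (-α) := div_nonneg (by positivity) hαpos.le
    have t2 : 0 ≤ |s| := abs_nonneg s
    rw [hK]; linarith
  refine ⟨2 * K * M / |β|, div_pos (by nlinarith [mul_pos hKpos hM]) hβpos,
    min ((-α) / (2 * (|s| + 1))) (α ^ 2 / (32 * (|β * γ| + 1))), ?_, ?_⟩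
  · apply lt_min
    · exact div_pos hαpos (by positivity)
    · exact div_pos (by nlinarith [mul_pos hαpos hαpos]) (by positivity)
  intro ε hε
  obtain ⟨hε0, hε1⟩ := hε
  have hεs : ε * |s| ≤ (-α) / 2 := by
    have h1 : ε ≤ (-α) / (2 * (|s| + 1)) := le_trans hε1 (min_le_left _ _)
    have h2 : 0 < |s| + 1 := by positivity
    have h3 := mul_le_mul_of_nonneg_right h1 (le_of_lt h2)
    have h4 : (-α) / (2 * (|s| + 1)) * (|s| + 1) = (-α) / 2 := by
      field_simp
    nlinarith [abs_nonneg s, hε0.le]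
  have hεbg : 4 * ε * |β * γ| ≤ α ^ 2 / 8 := by
    have h1 : ε ≤ α ^ 2 / (32 * (|β * γ| + 1)) := le_trans hε1 (min_le_right _ _)
    have h2 : 0 < |β * γ| + 1 := by positivity
    have h3 := mul_le_mul_of_nonneg_right h1 (le_of_lt h2)
    have h4 : α ^ 2 / (32 * (|β * γ| + 1)) * (|β * γ| + 1) = α ^ 2 / 32 := by
      field_simp
    nlinarith [abs_nonneg (β * γ), hε0.le]
  set A : ℝ := ε * s - α with hA
  have hAge : (-α) / 2 ≤ A := by
    have h1 : -(ε * |s|) ≤ ε * s := by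
      nlinarith [neg_abs_le s, hε0.le]
    rw [hA]; linarith
  clear_value A
  have hApos : 0 < A := by linarith
  set e : ℝ := 4 * ε * β * γ with he
  have heabs4 : |e| = 4 * ε * |β * γ| := by
    rw [he, show (4 : ℝ) * ε * β * γ = (4 * ε) * (β * γ) by ring, abs_mul,
      abs_of_pos (by linarith : (0:ℝ) < 4 * ε)]
  clear_value e
  have heabs : |e| ≤ α ^ 2 / 8 := by rw [heabs4]; linarith
  have hrad : 0 < A ^ 2 + e := by
    have h1 : α ^ 2 / 4 ≤ A ^ 2 := by nlinarith
    have h2 : -(α ^ 2 / 8) ≤ e := by nlinarith [neg_abs_le e]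
    nlinarith
  set S : ℝ := Real.sqrt (A ^ 2 + e) with hS
  have hSnn : 0 ≤ S := Real.sqrt_nonneg _
  have hSsq : S ^ 2 = A ^ 2 + e := Real.sq_sqrt hrad.le
  clear_value S
  -- |S - A| ≤ |e| / A
  have hSA : |S - A| ≤ |e| / A := by
    rw [le_div_iff₀ hApos]
    have key : (S - A) * (S + A) = e := by linear_combination hSsq
    have h1 : |S - A| * A ≤ |S - A| * (S + A) := by
      apply mul_le_mul_of_nonneg_left _ (abs_nonneg _)
      linarith
    have h2 : |S - A| * (S + A) = |e| := by
      rw [← key, abs_mul, abs_of_nonneg (show (0:ℝ) ≤ S + A by linarith)]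
    linarith [le_abs_self e]
  set c : ℝ := ε * s - α + Real.sqrt ((ε * s - α) ^ 2 + 4 * ε * β * γ) with hc
  have hcS : c = A + S := by rw [hc, hS, hA, he]
  clear_value c
  -- main estimate : |c + 2α| ≤ K * ε
  have hmain : |c + 2 * α| ≤ K * ε := by
    have h1 : c + 2 * α = (S - A) + 2 * (ε * s) := by
      rw [hcS, hA]; ring
    rw [h1]
    have h2 : |(S - A) + 2 * (ε * s)| ≤ |S - A| + 2 * (ε * |s|) := by
      calc |(S - A) + 2 * (ε * s)| ≤ |S - A| + |2 * (ε * s)| := abs_add_le _ _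
      _ = |S - A| + 2 * (ε * |s|) := by
          rw [abs_mul, abs_mul, abs_of_pos (by norm_num : (0:ℝ) < 2),
            abs_of_pos hε0]
    have h3 : |e| / A ≤ 8 * ε * |β * γ| / (-α) := by
      rw [heabs4, div_le_div_iff₀ hApos hαpos]
      have hprod : (4 * ε * |β * γ|) * (-α) ≤ (4 * ε * |β * γ|) * (2 * A) :=
        mul_le_mul_of_nonneg_left (by linarith) (by positivity)
      linarith [hprod]
    have h4 : 8 * ε * |β * γ| / (-α) = ε * (8 * |β * γ| / (-α)) := by ring
    have h5 : K * ε = ε * (2 * |s|) + ε * (8 * |β * γ| / (-α)) + ε := by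
      rw [hK]; ring
    linarith [hSA, abs_nonneg (S - A)]
  -- now the Hausdorff estimate
  have hrnn : (0 : ℝ) ≤ 2 * K * M / |β| * ε := by positivity
  have key1 : K * ε * M / (2 * |β|) * 2 ≤ 2 * K * M / |β| * ε := by
    have e1 : 2 * K * M / |β| * ε - K * ε * M / (2 * |β|) * 2 = K * M / |β| * ε := by
      field_simp; ring
    have e2 : 0 ≤ K * M / |β| * ε := by positivity
    linarith
  apply Metric.hausdorffDist_le_of_mem_dist hrnn
  · -- from slow manifold to critical manifold
    rintro p ⟨hp1, hp2⟩
    simp only [Set.mem_setOf_eq] at hp1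
    rw [Metric.mem_closedBall] at hp2
    have hcp : c * p.1 - 2 * β * p.2 = 0 := by rw [hcS]; exact hp1
    have hp1b : |p.1| ≤ M := by
      have h0 := hp2
      rw [Prod.dist_eq] at h0
      have h1 : dist p.1 (0 : ℝ × ℝ).1 ≤ M := le_trans (le_max_left _ _) h0
      simpa using h1
    set q₀ : ℝ × ℝ := (p.1, -α * p.1 / β) with hq₀
    have hq₀line : α * q₀.1 + β * q₀.2 = 0 := by
      simp only [hq₀]
      field_simp
      ring
    obtain ⟨q, hqline, hqball, hqdist⟩ := line_proj_aux α β M hM p q₀ hq₀line hp2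
    refine ⟨q, ⟨hqline, Metric.mem_closedBall.mpr hqball⟩, ?_⟩
    have hd0 : dist p q₀ = |p.2 - q₀.2| := by
      rw [Prod.dist_eq]
      simp only [hq₀, dist_self, Real.dist_eq]
      rw [max_eq_right (abs_nonneg _)]
    have hd1 : |p.2 - q₀.2| ≤ K * ε * M / (2 * |β|) := by
      have hq2 : β * q₀.2 = -α * p.1 := by
        show β * (-α * p.1 / β) = -α * p.1
        field_simp
      have hid : (p.2 - q₀.2) * (2 * β) = (c + 2 * α) * p.1 := by
        linear_combination (-1 : ℝ) * hcp - 2 * hq2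
      have habsid : |p.2 - q₀.2| * (2 * |β|) = |c + 2 * α| * |p.1| := by
        rw [show (2:ℝ) * |β| = |2 * β| by rw [abs_mul]; norm_num, ← abs_mul, hid,
          abs_mul]
      rw [le_div_iff₀ (by positivity : (0:ℝ) < 2 * |β|), habsid]
      exact mul_le_mul hmain hp1b (abs_nonneg _) (by positivity)
    calc dist p q ≤ 2 * dist p q₀ := hqdist
    _ = dist p q₀ * 2 := by ring
    _ ≤ K * ε * M / (2 * |β|) * 2 := by rw [hd0]; nlinarith
    _ ≤ 2 * K * M / |β| * ε := key1
  · -- from critical manifold to slow manifold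
    rintro p ⟨hp1, hp2⟩
    simp only [Set.mem_setOf_eq] at hp1
    rw [Metric.mem_closedBall] at hp2
    have hp1b : |p.1| ≤ M := by
      have h0 := hp2
      rw [Prod.dist_eq] at h0
      have h1 : dist p.1 (0 : ℝ × ℝ).1 ≤ M := le_trans (le_max_left _ _) h0
      simpa using h1
    set q₀ : ℝ × ℝ := (p.1, c * p.1 / (2 * β)) with hq₀
    have hq₀line : c * q₀.1 + (-(2 * β)) * q₀.2 = 0 := by
      simp only [hq₀]
      field_simp
      ring
    obtain ⟨q, hqline, hqball, hqdist⟩ := line_proj_aux c (-(2 * β)) M hM p q₀ hq₀line hp2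
    refine ⟨q, ⟨?_, Metric.mem_closedBall.mpr hqball⟩, ?_⟩
    · show (A + S) * q.1 - 2 * β * q.2 = 0
      rw [← hcS]
      linarith
    have hd0 : dist p q₀ = |p.2 - q₀.2| := by
      rw [Prod.dist_eq]
      simp only [hq₀, dist_self, Real.dist_eq]
      rw [max_eq_right (abs_nonneg _)]
    have hd1 : |p.2 - q₀.2| ≤ K * ε * M / (2 * |β|) := by
      have hq2 : (2 * β) * q₀.2 = c * p.1 := by
        show (2 * β) * (c * p.1 / (2 * β)) = c * p.1
        field_simp
      have hid : (p.2 - q₀.2) * (2 * β) = -((c + 2 * α) * p.1) := by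
        linear_combination (2 : ℝ) * hp1 - hq2
      have habsid : |p.2 - q₀.2| * (2 * |β|) = |c + 2 * α| * |p.1| := by
        rw [show (2:ℝ) * |β| = |2 * β| by rw [abs_mul]; norm_num, ← abs_mul, hid,
          abs_neg, abs_mul]
      rw [le_div_iff₀ (by positivity : (0:ℝ) < 2 * |β|), habsid]
      exact mul_le_mul hmain hp1b (abs_nonneg _) (by positivity)
    calc dist p q ≤ 2 * dist p q₀ := hqdist
    _ = dist p q₀ * 2 := by ring
    _ ≤ K * ε * M / (2 * |β|) * 2 := by rw [hd0]; nlinarith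
    _ ≤ 2 * K * M / |β| * ε := key1
end

section
/- Let α, β, γ, δ, μ, ν be real numbers with α < 0 and β, γ, δ ≠ 0, and set κ := −ν − α⁻¹βγ + δ. For ε > 0 set c_ε := ε(δ − ν + μ) − α + √((ε(δ − ν + μ) − α)² + 4 ε β γ). Then for every k ∈ ℝⁿ, every t ≥ 0, and every v₀ ∈ ℝ: (i) 2β/c_ε → −β/α as ε → 0⁺; (ii) the slow-manifold-restricted semiflow converges, i.e. e^{(−4π²‖k‖² − ν + δ + 2βγ/c_ε)·t}·v₀ → e^{(−4π²‖k‖² + κ)·t}·v₀ as ε → 0⁺; and (iii) (2β/c_ε)·e^{(−4π²‖k‖² − ν + δ + 2βγ/c_ε)·t}·v₀ → −α⁻¹β·e^{(−4π²‖k‖² + κ)·t}·v₀ as ε → 0⁺. -/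
open Real Filter Topology

/-- Convergence of the slow-manifold-restricted dynamics to the dynamics on
the critical manifold, for each Fourier mode `k`: with
`c_ε = ε(δ − ν + μ) − α + √((ε(δ − ν + μ) − α)² + 4εβγ)` and `κ = −ν − α⁻¹βγ + δ`,
(i) `2β/c_ε → −β/α`; (ii) the restricted semiflow converges; (iii) so does the fast component. -/
theorem stmt_11 (n : ℕ) (hn : 1 ≤ n) (α β γ δ μ ν : ℝ) (hα : α < 0)
    (hβ : β ≠ 0) (hγ : γ ≠ 0) (hδ : δ ≠ 0)
    (κ : ℝ) (hκ : κ = -ν - α⁻¹ * β * γ + δ)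
    (k : EuclideanSpace ℝ (Fin n)) (t : ℝ) (ht : 0 ≤ t) (v₀ : ℝ) :
    let c : ℝ → ℝ := fun ε =>
      ε * (δ - ν + μ) - α + Real.sqrt ((ε * (δ - ν + μ) - α) ^ 2 + 4 * ε * β * γ)
    Filter.Tendsto (fun ε : ℝ => 2 * β / c ε) (𝓝[>] 0) (𝓝 (-β / α)) ∧
    Filter.Tendsto
      (fun ε : ℝ =>
        Real.exp ((-4 * π ^ 2 * ‖k‖ ^ 2 - ν + δ + 2 * β * γ / c ε) * t) * v₀)
      (𝓝[>] 0) (𝓝 (Real.exp ((-4 * π ^ 2 * ‖k‖ ^ 2 + κ) * t) * v₀)) ∧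
    Filter.Tendsto
      (fun ε : ℝ =>
        (2 * β / c ε) * Real.exp ((-4 * π ^ 2 * ‖k‖ ^ 2 - ν + δ + 2 * β * γ / c ε) * t) * v₀)
      (𝓝[>] 0)
      (𝓝 (-α⁻¹ * β * Real.exp ((-4 * π ^ 2 * ‖k‖ ^ 2 + κ) * t) * v₀)) := by
  intro c
  have hαne : α ≠ 0 := ne_of_lt hα
  have hcont : Continuous c := by
    apply Continuous.add
    · fun_prop
    · exact (continuous_pow 2 |>.comp (by fun_prop) |>.add (by fun_prop)).sqrt
  have hc0 : c 0 = -2 * α := by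
    simp only [c, zero_mul, zero_sub, mul_zero, zero_mul, mul_zero]
    rw [add_zero, Real.sqrt_sq (by linarith : (0:ℝ) ≤ -α)]
    ring
  have hc : Tendsto c (𝓝[>] 0) (𝓝 (-2 * α)) := by
    have := hcont.tendsto 0
    rw [hc0] at this
    exact this.mono_left nhdsWithin_le_nhds
  have hcne : (-2 * α) ≠ 0 := by positivity
  have h1 : Tendsto (fun ε : ℝ => 2 * β / c ε) (𝓝[>] 0) (𝓝 (-β / α)) := by
    have := (tendsto_const_nhds (x := 2 * β) (f := 𝓝[>] (0:ℝ))).div hc hcne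
    convert this using 2
    · rfl
    field_simp
  have hexp : Tendsto
      (fun ε : ℝ => Real.exp ((-4 * π ^ 2 * ‖k‖ ^ 2 - ν + δ + 2 * β * γ / c ε) * t))
      (𝓝[>] 0) (𝓝 (Real.exp ((-4 * π ^ 2 * ‖k‖ ^ 2 + κ) * t))) := by
    have hd : Tendsto (fun ε : ℝ => 2 * β * γ / c ε) (𝓝[>] 0)
        (𝓝 (2 * β * γ / (-2 * α))) :=
      (tendsto_const_nhds (x := 2 * β * γ) (f := 𝓝[>] (0:ℝ))).div hc hcne
    have h := ((tendsto_const_nhds (x := -4 * π ^ 2 * ‖k‖ ^ 2 - ν + δ)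
        (f := 𝓝[>] (0:ℝ))).add hd).mul_const t
    have := (Real.continuous_exp.tendsto _).comp h
    have heq : (-4 * π ^ 2 * ‖k‖ ^ 2 - ν + δ + 2 * β * γ / (-2 * α)) * t
        = (-4 * π ^ 2 * ‖k‖ ^ 2 + κ) * t := by
      rw [hκ]; field_simp; ring
    rw [heq] at this
    exact this
  refine ⟨h1, hexp.mul_const v₀, ?_⟩
  have := (h1.mul hexp).mul_const v₀
  convert this using 2
  ring
end

section
/- Let α < 0, β ≠ 0, μ, κ ∈ ℝ, and let ε > 0 satisfy −μ + ε⁻¹α < κ (equivalently −α + εμ + εκ > 0). Fix k ∈ ℝⁿ, u₀, v₀ ∈ ℝ, and set A := −4π²‖k‖² − μ + ε⁻¹α. Let φ, ψ : ℝ → ℝ be differentiable functions with φ(0) = ψ(0) = u₀ satisfying, for all t ≥ 0, φ′(t) = A·φ(t) + (ε⁻¹β − α⁻¹β(μ + κ))·e^{(−4π²‖k‖² + κ)t}·v₀ and ψ′(t) = A·ψ(t) + ε⁻¹β·e^{(−4π²‖k‖² + κ)t}·v₀. Then for every t ≥ 0: |φ(t) − ψ(t)| ≤ ε · (|α⁻¹β(μ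 + κ)|/(−α + εμ + εκ)) · e^{κt} · |v₀|. -/
open Real

set_option maxHeartbeats 800000 in
/-- Second auxiliary Fourier-mode estimate: the Fourier coefficients of the
corrected auxiliary fast variable `u^{ε,0}` and of `ũ^ε` differ by at most
`ε · (|α⁻¹β(μ + κ)|/(−α + εμ + εκ)) · e^{κt} · |v₀|`. -/
theorem stmt_13 (n : ℕ) (hn : 1 ≤ n) (α β μ κ ε : ℝ) (hα : α < 0) (hβ : β ≠ 0)
    (hε : 0 < ε) (hκ : -μ + ε⁻¹ * α < κ) (k : EuclideanSpace ℝ (Fin n))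
    (u₀ v₀ : ℝ) (φ ψ : ℝ → ℝ) (hφ0 : φ 0 = u₀) (hψ0 : ψ 0 = u₀)
    (hφ : ∀ t : ℝ, 0 ≤ t →
      HasDerivAt φ ((-4 * π ^ 2 * ‖k‖ ^ 2 - μ + ε⁻¹ * α) * φ t
        + (ε⁻¹ * β - α⁻¹ * β * (μ + κ)) * Real.exp ((-4 * π ^ 2 * ‖k‖ ^ 2 + κ) * t) * v₀) t)
    (hψ : ∀ t : ℝ, 0 ≤ t →
      HasDerivAt ψ ((-4 * π ^ 2 * ‖k‖ ^ 2 - μ + ε⁻¹ * α) * ψ t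
        + ε⁻¹ * β * Real.exp ((-4 * π ^ 2 * ‖k‖ ^ 2 + κ) * t) * v₀) t) :
    ∀ t : ℝ, 0 ≤ t →
      |φ t - ψ t| ≤
        ε * (|α⁻¹ * β * (μ + κ)| / (-α + ε * μ + ε * κ)) * Real.exp (κ * t) * |v₀| := by
  set A : ℝ := -4 * π ^ 2 * ‖k‖ ^ 2 - μ + ε⁻¹ * α with hA
  set B : ℝ := -4 * π ^ 2 * ‖k‖ ^ 2 + κ with hB
  set c : ℝ := α⁻¹ * β * (μ + κ) with hc
  have hD : 0 < B - A := by
    have : ε⁻¹ * α - μ < κ := by linarith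
    simp only [hA, hB]; linarith
  have hP : 0 ≤ 4 * π ^ 2 * ‖k‖ ^ 2 := by positivity
  have hBκ : B ≤ κ := by simp only [hB]; linarith
  set F : ℝ → ℝ := fun t =>
    Real.exp (-A * t) * (φ t - ψ t) + c * v₀ * Real.exp ((B - A) * t) / (B - A) with hF
  have hFderiv : ∀ s : ℝ, 0 ≤ s → HasDerivAt F 0 s := by
    intro s hs
    have h1 : HasDerivAt (fun t : ℝ => Real.exp (-A * t))
        (Real.exp (-A * s) * -A) s := by
      simpa using ((hasDerivAt_id s).const_mul (-A)).exp
    have h2 : HasDerivAt (fun t => φ t - ψ t)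
        ((A * φ s + (ε⁻¹ * β - c) * Real.exp (B * s) * v₀)
          - (A * ψ s + ε⁻¹ * β * Real.exp (B * s) * v₀)) s := (hφ s hs).sub (hψ s hs)
    have h3 := h1.mul h2
    have he : HasDerivAt (fun t : ℝ => Real.exp ((B - A) * t))
        (Real.exp ((B - A) * s) * (B - A)) s := by
      simpa using ((hasDerivAt_id s).const_mul (B - A)).exp
    have h4 := (he.const_mul (c * v₀)).div_const (B - A)
    have h5 := h3.add h4
    have hexp : Real.exp ((B - A) * s) = Real.exp (-A * s) * Real.exp (B * s) := by
      rw [← Real.exp_add]; ring_nf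
    rw [hexp] at h5
    refine h5.congr_deriv ?_
    have hne : B - A ≠ 0 := ne_of_gt hD
    field_simp
    ring
  intro t ht
  have hFt : F t = F 0 := by
    rcases eq_or_lt_of_le ht with h | h
    · rw [← h]
    · have hcont : ContinuousOn F (Set.Icc 0 t) := fun s hs =>
        ((hFderiv s hs.1).continuousAt).continuousWithinAt
      exact constant_of_has_deriv_right_zero hcont
        (fun s hs => ((hFderiv s hs.1).hasDerivWithinAt)) t (Set.right_mem_Icc.mpr ht)
  have hF0 : F 0 = c * v₀ / (B - A) := by
    simp [hF, hφ0, hψ0]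
  have hEt : Real.exp (-A * t) * (φ t - ψ t)
      = c * v₀ / (B - A) - c * v₀ * Real.exp ((B - A) * t) / (B - A) := by
    have h := hFt.trans hF0
    simp only [hF] at h
    linarith
  have hmul : Real.exp (A * t) * Real.exp (-A * t) = 1 := by
    rw [← Real.exp_add]; ring_nf; exact Real.exp_zero
  have h1 : φ t - ψ t = Real.exp (A * t) *
      (c * v₀ / (B - A) - c * v₀ * Real.exp ((B - A) * t) / (B - A)) := by
    calc φ t - ψ t = (Real.exp (A * t) * Real.exp (-A * t)) * (φ t - ψ t) := by
          rw [hmul]; ring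
      _ = Real.exp (A * t) * (Real.exp (-A * t) * (φ t - ψ t)) := by ring
      _ = _ := by rw [hEt]
  have e1 : Real.exp (A * t) * Real.exp ((B - A) * t) = Real.exp (B * t) := by
    rw [← Real.exp_add]; ring_nf
  have hδ : φ t - ψ t = c * v₀ * (Real.exp (A * t) - Real.exp (B * t)) / (B - A) := by
    rw [h1]
    linear_combination (-(c * v₀ / (B - A))) * e1
  rw [hδ]
  have hAB : Real.exp (A * t) ≤ Real.exp (B * t) :=
    Real.exp_le_exp.mpr (by nlinarith)
  have habs : |c * v₀ * (Real.exp (A * t) - Real.exp (B * t)) / (B - A)|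
      = |c| * |v₀| * (Real.exp (B * t) - Real.exp (A * t)) / (B - A) := by
    rw [abs_div, abs_mul, abs_mul, abs_of_pos hD, abs_sub_comm,
      abs_of_nonneg (by linarith : (0:ℝ) ≤ Real.exp (B * t) - Real.exp (A * t))]
  rw [habs]
  have hRHS : ε * (|c| / (-α + ε * μ + ε * κ)) * Real.exp (κ * t) * |v₀|
      = |c| * |v₀| * Real.exp (κ * t) / (B - A) := by
    have h2 : -α + ε * μ + ε * κ = ε * (B - A) := by
      simp only [hA, hB]
      field_simp
      ring
    rw [h2]
    rw [div_mul_eq_div_div_swap, ← mul_div_assoc, ← mul_div_assoc,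
      mul_div_assoc ε, mul_div_cancel_left₀ _ (ne_of_gt hε)]
    ring
  rw [hRHS]
  have hexp2 : Real.exp (B * t) - Real.exp (A * t) ≤ Real.exp (κ * t) := by
    have hk : Real.exp (B * t) ≤ Real.exp (κ * t) :=
      Real.exp_le_exp.mpr (by nlinarith)
    linarith [Real.exp_pos (A * t)]
  gcongr
end

section
/- Let α < 0, β ≠ 0, μ, κ ∈ ℝ, and let ε > 0 satisfy −μ + ε⁻¹α < 0. Fix k ∈ ℝⁿ, u₀, v₀ ∈ ℝ, and set A := −4π²‖k‖² − μ + ε⁻¹α. Let φ : ℝ → ℝ be the differentiable function with φ(0) = u₀ satisfying φ′(t) = A·φ(t) + (ε⁻¹β − α⁻¹β(μ + κ))·e^{(−4π²‖k‖² + κ)t}·v₀ for all t ≥ 0. Then for every t ≥ 0: |φ(t) + α⁻¹β·e^{(−4π²‖k‖² + κ)t}·v₀| = e^{A t}·|u₀ + α⁻¹β·v₀| ≤ e^{(−μ + ε⁻¹α)t}·|u₀ + α⁻¹β·v₀|. -/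
open Real

/-- Third auxiliary Fourier-mode estimate: the distance of the Fourier
coefficient of `u^{ε,0}` to the Fourier coefficient of `h⁰(v⁰(t)) = −α⁻¹β v⁰(t)` decays like
`e^{At}|u₀ + α⁻¹β v₀|`, with `A = −4π²‖k‖² − μ + ε⁻¹α ≤ −μ + ε⁻¹α < 0`. -/
theorem stmt_14 (n : ℕ) (hn : 1 ≤ n) (α β μ κ ε : ℝ) (hα : α < 0) (hβ : β ≠ 0)
    (hε : 0 < ε) (hneg : -μ + ε⁻¹ * α < 0) (k : EuclideanSpace ℝ (Fin n))
    (u₀ v₀ : ℝ) (φ : ℝ → ℝ) (hφ0 : φ 0 = u₀)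
    (hφ : ∀ t : ℝ, 0 ≤ t →
      HasDerivAt φ ((-4 * π ^ 2 * ‖k‖ ^ 2 - μ + ε⁻¹ * α) * φ t
        + (ε⁻¹ * β - α⁻¹ * β * (μ + κ)) * Real.exp ((-4 * π ^ 2 * ‖k‖ ^ 2 + κ) * t) * v₀) t) :
    ∀ t : ℝ, 0 ≤ t →
      |φ t + α⁻¹ * β * Real.exp ((-4 * π ^ 2 * ‖k‖ ^ 2 + κ) * t) * v₀|
          = Real.exp ((-4 * π ^ 2 * ‖k‖ ^ 2 - μ + ε⁻¹ * α) * t) * |u₀ + α⁻¹ * β * v₀| ∧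
        Real.exp ((-4 * π ^ 2 * ‖k‖ ^ 2 - μ + ε⁻¹ * α) * t) * |u₀ + α⁻¹ * β * v₀|
          ≤ Real.exp ((-μ + ε⁻¹ * α) * t) * |u₀ + α⁻¹ * β * v₀| := by
  have hα' : α ≠ 0 := ne_of_lt hα
  set A : ℝ := -4 * π ^ 2 * ‖k‖ ^ 2 - μ + ε⁻¹ * α with hA
  set B : ℝ := -4 * π ^ 2 * ‖k‖ ^ 2 + κ with hB
  set ψ : ℝ → ℝ := fun t => φ t + α⁻¹ * β * Real.exp (B * t) * v₀ with hψ
  -- ψ satisfies ψ' = A ψ on [0, ∞)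
  have hψderiv : ∀ t : ℝ, 0 ≤ t → HasDerivAt ψ (A * ψ t) t := by
    intro t ht
    have h1 : HasDerivAt (fun t => α⁻¹ * β * Real.exp (B * t) * v₀)
        (α⁻¹ * β * (B * Real.exp (B * t)) * v₀) t := by
      have : HasDerivAt (fun t => Real.exp (B * t)) (B * Real.exp (B * t)) t := by
        simpa [mul_comm] using ((hasDerivAt_id t).const_mul B).exp
      exact (this.const_mul (α⁻¹ * β)).mul_const v₀
    have h2 := (hφ t ht).add h1
    refine h2.congr_deriv ?_
    symm
    simp only [hψ]
    field_simp [hε.ne']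
    rw [hA, hB]
    field_simp
    ring
  -- g t = exp(-A t) * ψ t has zero derivative
  have hg : ∀ t : ℝ, 0 ≤ t → HasDerivAt (fun t => Real.exp (-A * t) * ψ t) 0 t := by
    intro t ht
    have he : HasDerivAt (fun t => Real.exp (-A * t)) (-A * Real.exp (-A * t)) t := by
      simpa [mul_comm] using ((hasDerivAt_id t).const_mul (-A)).exp
    have := he.mul (hψderiv t ht)
    refine this.congr_deriv ?_
    ring
  have hconst : ∀ t : ℝ, 0 ≤ t → Real.exp (-A * t) * ψ t = ψ 0 := by
    intro t ht
    have key := constant_of_has_deriv_right_zero (f := fun t => Real.exp (-A * t) * ψ t)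
      (a := 0) (b := t)
      (fun x hx => ((hg x hx.1).continuousAt).continuousWithinAt)
      (fun x hx => ((hg x hx.1).hasDerivWithinAt))
      t (Set.right_mem_Icc.mpr ht)
    simpa using key
  intro t ht
  have hψt : ψ t = Real.exp (A * t) * ψ 0 := by
    have h := hconst t ht
    calc ψ t = Real.exp (A * t) * (Real.exp (-A * t) * ψ t) := by
          rw [← mul_assoc, ← Real.exp_add]; ring_nf; simp
      _ = Real.exp (A * t) * ψ 0 := by rw [h]
  have hψ0 : ψ 0 = u₀ + α⁻¹ * β * v₀ := by simp [hψ, hφ0]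
  constructor
  · show |ψ t| = Real.exp (A * t) * |u₀ + α⁻¹ * β * v₀|
    rw [hψt, hψ0, abs_mul, abs_of_pos (Real.exp_pos _)]
  · apply mul_le_mul_of_nonneg_right _ (abs_nonneg _)
    apply Real.exp_le_exp.mpr
    apply mul_le_mul_of_nonneg_right _ ht
    have h4 : 0 ≤ 4 * π ^ 2 * ‖k‖ ^ 2 := by positivity
    linarith
end
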